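/- Let ρ be a continuous representation of SL(2,ℝ) on a finite-dimensional real vector space V, and let r ∈ ℝ with r ≠ 0. If v ∈ V⁻ and v ≠ 0, then q⁺(ρ(u_r)v) ≠ 0; equivalently, ρ(u_r)v ∉ V⁰ ⊕ V⁻. -/

import Mathlib

open Filter Topology

/-- `SL(2,ℝ)`. -/
abbrev SL2R := Matrix.SpecialLinearGroup (Fin 2) ℝ

/-- The element `a = diag(α, α⁻¹)` of `SL(2,ℝ)`, for `α > 1`. -/
noncomputable def diagSL (α : ℝ) (hα : 1 < α) : SL2R :=
  ⟨!![α, 0; 0, α⁻¹], by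
    have h0 : α ≠ 0 := by linarith
    simp [Matrix.det_fin_two_of, mul_inv_cancel₀ h0]⟩

/-- The unipotent element `u_r = [[1,r],[0,1]]` of `SL(2,ℝ)`. -/
def uSL (r : ℝ) : SL2R :=
  ⟨!![1, r; 0, 1], by simp [Matrix.det_fin_two_of]⟩

/-- Topology on `SL(2,ℝ)`, induced from the matrix entries. -/
noncomputable instance : TopologicalSpace SL2R :=
  TopologicalSpace.induced (fun g => (g : Matrix (Fin 2) (Fin 2) ℝ)) inferInstance

section Spaces

variable {V : Type*} [NormedAddCommGroup V] [NormedSpace ℝ V]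

/-- `V⁺ = {v : a^{−k} v → 0}` (with respect to `ρ` and `a`). -/
def Vplus (ρ : SL2R →* (V →ₗ[ℝ] V)) (a : SL2R) : Set V :=
  {v | Tendsto (fun k : ℕ => ((ρ a⁻¹) ^ k) v) atTop (𝓝 0)}

/-- `V⁰ = {v : a v = v}` (with respect to `ρ` and `a`). -/
def Vzero (ρ : SL2R →* (V →ₗ[ℝ] V)) (a : SL2R) : Set V :=
  {v | ρ a v = v}

/-- `V⁻ = {v : a^k v → 0}` (with respect to `ρ` and `a`). -/
def Vminus (ρ : SL2R →* (V →ₗ[ℝ] V)) (a : SL2R) : Set V :=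
  {v | Tendsto (fun k : ℕ => ((ρ a) ^ k) v) atTop (𝓝 0)}

end Spaces

/-- The lower unipotent element. -/
def lSL (s : ℝ) : SL2R := ⟨!![1, 0; s, 1], by simp [Matrix.det_fin_two_of]⟩

lemma lSL_zero : lSL 0 = 1 := Subtype.ext (by simp [lSL, Matrix.one_fin_two])

lemma lSL_mul (s t : ℝ) : lSL s * lSL t = lSL (s + t) := by
  apply Subtype.ext
  simp only [Matrix.SpecialLinearGroup.coe_mul]
  show (!![1, 0; s, 1] : Matrix (Fin 2) (Fin 2) ℝ) * !![1, 0; t, 1] = !![1, 0; s + t, 1]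
  simp [lSL, Matrix.mul_fin_two, add_comm]

lemma diag_lSL {α : ℝ} (hα : 1 < α) (s : ℝ) :
    diagSL α hα * lSL s = lSL (s * (α⁻¹ * α⁻¹)) * diagSL α hα := by
  have h0 : α ≠ 0 := by positivity
  apply Subtype.ext
  simp only [Matrix.SpecialLinearGroup.coe_mul]
  show (!![α, 0; 0, α⁻¹] : Matrix (Fin 2) (Fin 2) ℝ) * !![1, 0; s, 1]
      = !![1, 0; s * (α⁻¹ * α⁻¹), 1] * !![α, 0; 0, α⁻¹]
  rw [Matrix.mul_fin_two, Matrix.mul_fin_two]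
  ext i j
  fin_cases i <;> fin_cases j <;> simp <;> field_simp

lemma diag_pow_lSL {α : ℝ} (hα : 1 < α) (s : ℝ) (k : ℕ) :
    (diagSL α hα) ^ k * lSL s = lSL (s * (α⁻¹ * α⁻¹) ^ k) * (diagSL α hα) ^ k := by
  induction k with
  | zero => simp
  | succ k ih =>
    rw [pow_succ', mul_assoc, ih, ← mul_assoc, diag_lSL hα, mul_assoc, ← pow_succ']
    have : s * (α⁻¹ * α⁻¹) ^ k * (α⁻¹ * α⁻¹) = s * (α⁻¹ * α⁻¹) ^ (k + 1) := by ring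
    rw [this]

lemma sigma_semiconj {α : ℝ} (hα : 1 < α) {r : ℝ} (hr : r ≠ 0) :
    SemiconjBy (lSL (-r⁻¹) * uSL r * lSL (-r⁻¹)) (diagSL α hα) (diagSL α hα)⁻¹ := by
  have h0 : α ≠ 0 := by positivity
  show _ * _ = _ * _
  apply Subtype.ext
  simp only [Matrix.SpecialLinearGroup.coe_mul, Matrix.SpecialLinearGroup.coe_inv]
  show ((!![1,0;-r⁻¹,1] : Matrix (Fin 2) (Fin 2) ℝ) * !![1,r;0,1] * !![1,0;-r⁻¹,1]) * !![α,0;0,α⁻¹]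
      = (!![α,0;0,α⁻¹] : Matrix (Fin 2) (Fin 2) ℝ).adjugate * (!![1,0;-r⁻¹,1] * !![1,r;0,1] * !![1,0;-r⁻¹,1])
  rw [Matrix.adjugate_fin_two_of]
  simp only [Matrix.mul_fin_two]
  ext i j
  fin_cases i <;> fin_cases j <;> field_simp <;> ring

lemma tendsto_lSL {c : ℕ → ℝ} (hc : Tendsto c atTop (𝓝 0)) :
    Tendsto (fun k => lSL (c k)) atTop (𝓝 1) := by
  have hn : 𝓝 (1 : SL2R) = Filter.comap (fun g : SL2R => (g : Matrix (Fin 2) (Fin 2) ℝ))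
      (𝓝 ((1 : SL2R) : Matrix (Fin 2) (Fin 2) ℝ)) := nhds_induced _ _
  rw [hn, tendsto_comap_iff]
  have : ((1 : SL2R) : Matrix (Fin 2) (Fin 2) ℝ) = !![1,0;0,1] := by
    simp [Matrix.one_fin_two]
  rw [this]
  refine tendsto_pi_nhds.2 ?_
  intro i
  refine tendsto_pi_nhds.2 ?_
  intro j
  fin_cases i <;> fin_cases j <;> simp [lSL, Function.comp] <;>
    first
      | exact tendsto_const_nhds
      | exact hc

section AuxV

variable {V : Type*} [NormedAddCommGroup V] [NormedSpace ℝ V] [FiniteDimensional ℝ V]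

lemma joint_tendsto (ρ : SL2R →* (V →ₗ[ℝ] V)) (hρ : ∀ v : V, Continuous fun g => ρ g v)
    {g : ℕ → SL2R} {g₀ : SL2R} (hg : Tendsto g atTop (𝓝 g₀))
    {y : ℕ → V} {y₀ : V} (hy : Tendsto y atTop (𝓝 y₀)) :
    Tendsto (fun k => ρ (g k) (y k)) atTop (𝓝 (ρ g₀ y₀)) := by
  classical
  set b := Module.finBasis ℝ V with hb
  have hrepr : ∀ i, Tendsto (fun k => b.repr (y k) i) atTop (𝓝 (b.repr y₀ i)) := by
    intro i
    have hc : Continuous fun x : V => b.repr x i :=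
      LinearMap.continuous_of_finiteDimensional (b.coord i)
    exact (hc.tendsto y₀).comp hy
  have hterm : ∀ i, Tendsto (fun k => (b.repr (y k) i) • ρ (g k) (b i)) atTop
      (𝓝 ((b.repr y₀ i) • ρ g₀ (b i))) :=
    fun i => (hrepr i).smul (((hρ (b i)).tendsto g₀).comp hg)
  have hsum := tendsto_finset_sum Finset.univ (fun i _ => hterm i)
  have key : ∀ (h : SL2R) (x : V), ∑ i, (b.repr x i) • ρ h (b i) = ρ h x := by
    intro h x
    have : ρ h (∑ i, (b.repr x i) • b i) = ∑ i, (b.repr x i) • ρ h (b i) := by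
      rw [map_sum]
      simp only [map_smul]
    rw [← this, b.sum_repr]
  rw [← key g₀ y₀]
  exact hsum.congr (fun k => key (g k) (y k))

set_option synthInstance.maxHeartbeats 1000000 in
set_option maxHeartbeats 1000000 in
lemma key_lemma (T S : V →ₗ[ℝ] V) (hTS : T * S = 1) (hST : S * T = 1)
    {p : V} (hp : Tendsto (fun k : ℕ => (T ^ k) p) atTop (𝓝 0))
    {y₀ : V} (hbd : Tendsto (fun k : ℕ => (S ^ k) p) atTop (𝓝 y₀)) : p = 0 := by
  classical
  have hcomm : Commute T S := by
    unfold Commute SemiconjBy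
    rw [hTS, hST]
  set P : Submodule ℝ V :=
    { carrier := {x | Tendsto (fun k : ℕ => (T ^ k) x) atTop (𝓝 0)}
      add_mem' := fun {x y} hx hy => by simpa using hx.add hy
      zero_mem' := by simpa using (tendsto_const_nhds : Tendsto (fun _ : ℕ => (0:V)) atTop _)
      smul_mem' := fun c x hx => by simpa using hx.const_smul c } with hP
  have hmem : ∀ k : ℕ, (S ^ k) p ∈ P := by
    intro k
    have h1 : ∀ j : ℕ, (T ^ j) ((S ^ k) p) = (S ^ k) ((T ^ j) p) := by
      intro j
      rw [← Module.End.mul_apply, ← Module.End.mul_apply, (hcomm.pow_pow j k).eq]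
    have h2 : Continuous (S ^ k : V →ₗ[ℝ] V) := LinearMap.continuous_of_finiteDimensional _
    have h3 := (h2.tendsto 0).comp hp
    simp only [map_zero] at h3
    exact h3.congr (fun j => (h1 j).symm)
  set x : ℕ → P := fun k => ⟨(S ^ k) p, hmem k⟩ with hx
  obtain ⟨C, hC⟩ := hbd.norm.bddAbove_range
  have hCk : ∀ k, ‖(S ^ k) p‖ ≤ C := fun k => hC ⟨k, rfl⟩
  set b := Module.finBasis ℝ P with hb
  have hcoord : ∀ i, ∃ D : ℝ, 0 ≤ D ∧ ∀ z : P, |b.repr z i| ≤ D * ‖z‖ := by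
    intro i
    refine ⟨‖LinearMap.toContinuousLinearMap (b.coord i)‖, ContinuousLinearMap.opNorm_nonneg _, fun z => ?_⟩
    have h := (LinearMap.toContinuousLinearMap (b.coord i)).le_opNorm z
    simpa [Real.norm_eq_abs] using h
  have hTSk : ∀ k : ℕ, (T ^ k) * (S ^ k) = 1 := by
    intro k
    rw [← hcomm.mul_pow, hTS, one_pow]
  have hpk : ∀ k : ℕ, p = ∑ i, (b.repr (x k) i) • ((T ^ k) ((b i : V))) := by
    intro k
    have h0 : p = (T ^ k) ((S ^ k) p) := by
      rw [← Module.End.mul_apply, hTSk k, Module.End.one_apply]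
    have h1 : ((S ^ k) p : V) = ∑ i, (b.repr (x k) i) • ((b i : V)) := by
      have h2 := congrArg (Subtype.val) (b.sum_repr (x k))
      rw [Submodule.coe_sum] at h2
      simp only [Submodule.coe_smul] at h2
      exact h2.symm
    rw [h0, h1, map_sum]
    simp only [map_smul]
  have hsum0 : Tendsto (fun k => ∑ i, (b.repr (x k) i) • ((T ^ k) ((b i : V)))) atTop
      (𝓝 0) := by
    have h00 : (0 : V) = ∑ _i : Fin (Module.finrank ℝ P), (0 : V) := by simp
    rw [h00]
    refine tendsto_finset_sum _ (fun i _ => ?_)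
    obtain ⟨D, hD0, hD⟩ := hcoord i
    rw [tendsto_zero_iff_norm_tendsto_zero]
    have hbi : Tendsto (fun k : ℕ => (T ^ k) ((b i : V))) atTop (𝓝 0) := (b i).2
    refine squeeze_zero (fun k => norm_nonneg _)
      (g := fun k => (D * C) * ‖(T ^ k) ((b i : V))‖) (fun k => ?_) ?_
    · rw [norm_smul, Real.norm_eq_abs]
      have h1 : |b.repr (x k) i| ≤ D * C := by
        calc |b.repr (x k) i| ≤ D * ‖x k‖ := hD _
          _ ≤ D * C := by
              apply mul_le_mul_of_nonneg_left _ hD0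
              simpa using hCk k
      exact mul_le_mul_of_nonneg_right h1 (norm_nonneg _)
    · have := hbi.norm.const_mul (D * C)
      simpa using this
  exact tendsto_nhds_unique (tendsto_const_nhds.congr hpk) hsum0

end AuxV

lemma tendsto_beta {α : ℝ} (hα : 1 < α) (s : ℝ) :
    Tendsto (fun k : ℕ => s * (α⁻¹ * α⁻¹) ^ k) atTop (𝓝 0) := by
  have h0 : (0:ℝ) < α := by positivity
  have h1 : (0:ℝ) ≤ α⁻¹ * α⁻¹ := by positivity
  have h2 : α⁻¹ * α⁻¹ < 1 := by
    nlinarith [mul_inv_cancel₀ (ne_of_gt h0), inv_pos.mpr h0]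
  have := (tendsto_pow_atTop_nhds_zero_of_lt_one h1 h2).const_mul s
  simpa using this

section Spaces2

variable {V : Type*} [NormedAddCommGroup V] [NormedSpace ℝ V]


lemma Vzero_pow (ρ : SL2R →* (V →ₗ[ℝ] V)) (a : SL2R) {z : V} (hz : z ∈ Vzero ρ a)
    (k : ℕ) : ((ρ a) ^ k) z = z := by
  induction k with
  | zero => simp
  | succ k ih =>
    have hz' : ρ a z = z := hz
    rw [pow_succ, Module.End.mul_apply, hz', ih]

end Spaces2

section MainAux

variable {V : Type*} [NormedAddCommGroup V] [NormedSpace ℝ V] [FiniteDimensional ℝ V]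

lemma pow_apply_lSL (ρ : SL2R →* (V →ₗ[ℝ] V)) {α : ℝ} (hα : 1 < α) (s : ℝ) (x : V) (k : ℕ) :
    ((ρ (diagSL α hα)) ^ k) (ρ (lSL s) x)
      = ρ (lSL (s * (α⁻¹ * α⁻¹) ^ k)) (((ρ (diagSL α hα)) ^ k) x) := by
  rw [← map_pow, ← Module.End.mul_apply, ← map_mul, diag_pow_lSL hα, map_mul,
    Module.End.mul_apply, map_pow]

lemma Vminus_lSL (ρ : SL2R →* (V →ₗ[ℝ] V)) (hρ : ∀ v : V, Continuous fun g => ρ g v)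
    {α : ℝ} (hα : 1 < α) (s : ℝ)
    {x : V} (hx : x ∈ Vminus ρ (diagSL α hα)) : ρ (lSL s) x ∈ Vminus ρ (diagSL α hα) := by
  have hx' : Tendsto (fun k : ℕ => ((ρ (diagSL α hα)) ^ k) x) atTop (𝓝 0) := hx
  have h := joint_tendsto ρ hρ (tendsto_lSL (tendsto_beta hα s)) hx'
  have h2 : Tendsto (fun k : ℕ => ((ρ (diagSL α hα)) ^ k) (ρ (lSL s) x)) atTop (𝓝 (ρ 1 0)) :=
    h.congr (fun k => (pow_apply_lSL ρ hα s x k).symm)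
  show Tendsto _ atTop (𝓝 0)
  simpa using h2

theorem stmt7_main
    (ρ : SL2R →* (V →ₗ[ℝ] V)) (hρ_cont : ∀ v : V, Continuous fun g => ρ g v)
    {α : ℝ} (hα : 1 < α)
    {r : ℝ} (hr : r ≠ 0) (v : V) (hv : v ∈ Vminus ρ (diagSL α hα)) (hv0 : v ≠ 0) :
    ¬ ∃ z ∈ Vzero ρ (diagSL α hα), ∃ m ∈ Vminus ρ (diagSL α hα), ρ (uSL r) v = z + m := by
  rintro ⟨z, hz, m, hm, hw⟩
  set a := diagSL α hα with ha
  set w := ρ (uSL r) v with hwdef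
  -- the auxiliary vector v₀ with ρ(ℓ_{-1/r}) v₀ = v
  set v₀ := ρ (lSL r⁻¹) v with hv₀def
  have hv0v : ρ (lSL (-r⁻¹)) v₀ = v := by
    rw [hv₀def, ← Module.End.mul_apply, ← map_mul, lSL_mul]
    norm_num [lSL_zero]
  have hv₀minus : v₀ ∈ Vminus ρ a := Vminus_lSL ρ hρ_cont hα _ hv
  have hv₀ne : v₀ ≠ 0 := fun h => hv0 (by rw [← hv0v, h, map_zero])
  set g : SL2R := lSL (-r⁻¹) * uSL r * lSL (-r⁻¹) with hg
  set p := ρ g v₀ with hp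
  have hsc : SemiconjBy g a a⁻¹ := sigma_semiconj hα hr
  -- p lies in V⁺
  have hpplus : Tendsto (fun k : ℕ => ((ρ a⁻¹) ^ k) p) atTop (𝓝 0) := by
    have hk : ∀ k : ℕ, ((ρ a⁻¹) ^ k) p = ρ g (((ρ a) ^ k) v₀) := by
      intro k
      rw [hp, ← map_pow, ← Module.End.mul_apply, ← map_mul, ← (hsc.pow_right k).eq,
        map_mul, Module.End.mul_apply, map_pow]
    have hc : Continuous (ρ g) := LinearMap.continuous_of_finiteDimensional _
    have h2 := (hc.tendsto 0).comp hv₀minus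
    simp only [map_zero] at h2
    exact (h2.congr (fun k => (hk k).symm))
  -- forward orbit of w converges to z
  have hworb : Tendsto (fun k : ℕ => ((ρ a) ^ k) w) atTop (𝓝 z) := by
    have he : ∀ k : ℕ, ((ρ a) ^ k) w = z + ((ρ a) ^ k) m := fun k => by
      rw [hw, map_add, Vzero_pow ρ a hz k]
    have hm' : Tendsto (fun k : ℕ => ((ρ a) ^ k) m) atTop (𝓝 0) := hm
    have h2 := (tendsto_const_nhds (x := z)).add hm'
    rw [add_zero] at h2
    exact h2.congr (fun k => (he k).symm)
  -- p = ρ(ℓ_{-1/r}) w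
  have hpw : p = ρ (lSL (-r⁻¹)) w := by
    rw [hp, hg, map_mul, map_mul, Module.End.mul_apply, Module.End.mul_apply, hv0v, hwdef]
  -- forward orbit of p converges
  have hporb : Tendsto (fun k : ℕ => ((ρ a) ^ k) p) atTop (𝓝 (ρ 1 z)) := by
    have hk : ∀ k : ℕ, ((ρ a) ^ k) p = ρ (lSL (-r⁻¹ * (α⁻¹ * α⁻¹) ^ k)) (((ρ a) ^ k) w) := by
      intro k
      rw [hpw, pow_apply_lSL ρ hα]
    have h2 := joint_tendsto ρ hρ_cont (tendsto_lSL (tendsto_beta hα (-r⁻¹))) hworb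
    exact h2.congr (fun k => (hk k).symm)
  -- key lemma gives p = 0
  have hTS : ρ a⁻¹ * ρ a = 1 := by rw [← map_mul, inv_mul_cancel, map_one]
  have hST : ρ a * ρ a⁻¹ = 1 := by rw [← map_mul, mul_inv_cancel, map_one]
  have hp0 : p = 0 := key_lemma (ρ a⁻¹) (ρ a) hTS hST hpplus hporb
  -- but p ≠ 0
  have hv₀p : v₀ = ρ g⁻¹ p := by
    rw [hp, ← Module.End.mul_apply, ← map_mul, inv_mul_cancel, map_one, Module.End.one_apply]
  exact hv₀ne (by rw [hv₀p, hp0, map_zero])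

end MainAux

/-- if `v ∈ V⁻ \ {0}` and `r ≠ 0`, then `q⁺(ρ(u_r) v) ≠ 0`; equivalently
`ρ(u_r) v ∉ V⁰ ⊕ V⁻`.  The projections `q⁺, q⁰, q⁻` attached to the decomposition
`V = V⁺ ⊕ V⁰ ⊕ V⁻` are given as data together with their characterizing properties. -/
theorem stmt7
    {V : Type*} [NormedAddCommGroup V] [NormedSpace ℝ V] [FiniteDimensional ℝ V]
    (ρ : SL2R →* (V →ₗ[ℝ] V)) (hρ_cont : ∀ v : V, Continuous fun g => ρ g v)
    {α : ℝ} (hα : 1 < α)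
    (qp q0 qm : V →ₗ[ℝ] V)
    (hdecomp : ∀ v : V, qp v ∈ Vplus ρ (diagSL α hα) ∧ q0 v ∈ Vzero ρ (diagSL α hα) ∧
      qm v ∈ Vminus ρ (diagSL α hα) ∧ qp v + q0 v + qm v = v)
    (huniq : ∀ v p z m : V, p ∈ Vplus ρ (diagSL α hα) → z ∈ Vzero ρ (diagSL α hα) →
      m ∈ Vminus ρ (diagSL α hα) → v = p + z + m → p = qp v ∧ z = q0 v ∧ m = qm v)
    {r : ℝ} (hr : r ≠ 0) (v : V) (hv : v ∈ Vminus ρ (diagSL α hα)) (hv0 : v ≠ 0) :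
    qp (ρ (uSL r) v) ≠ 0 ∧
      ¬ ∃ z ∈ Vzero ρ (diagSL α hα), ∃ m ∈ Vminus ρ (diagSL α hα), ρ (uSL r) v = z + m := by
  have main := stmt7_main ρ hρ_cont hα hr v hv hv0
  refine ⟨fun hqp => main ?_, main⟩
  refine ⟨q0 (ρ (uSL r) v), (hdecomp _).2.1, qm (ρ (uSL r) v), (hdecomp _).2.2.1, ?_⟩
  have h4 := (hdecomp (ρ (uSL r) v)).2.2.2
  rw [hqp, zero_add] at h4
  exact h4.symm
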